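/- Let X = Y = [0,1] with Lebesgue measure λ = μ = ν, let α ∈ [0,1) be irrational, Γ₀ = {(x,x) : x ∈ [0,1]}, Γ₁ = {(x, x ⊕ α) : x ∈ [0,1]} where ⊕ is addition mod 1, and let c = a on Γ₀, c = b on Γ₁ (a, b ∈ [0,∞)) and c = ∞ elsewhere. Then Γ₀ and Γ₁ are c-monotone sets, and the transport plans π₀ = (x ↦ (x,x))_#λ and π₁ = (x ↦ (x, x⊕α))_#λ are finite c-monotone transport plans in Π(λ,λ) with I_c[π₀] = a and I_c[π₁] = b; in particular, if a > b then π₀ is c-monotone but not optimal. -/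

import Mathlib

open MeasureTheory Set
open scoped ENNReal

noncomputable section

def IsCoupling {X Y : Type*} [MeasurableSpace X] [MeasurableSpace Y]
    (μ : Measure X) (ν : Measure Y) (π : Measure (X × Y)) : Prop :=
  π.map Prod.fst = μ ∧ π.map Prod.snd = ν

def CMonotoneSet {X Y : Type*} (c : X × Y → ℝ≥0∞) (Γ : Set (X × Y)) : Prop :=
  ∀ (n : ℕ) (f : Fin (n + 1) → X × Y), (∀ i, f i ∈ Γ) →
    ∑ i, c (f i) ≤ ∑ i, c ((f i).1, (f (i + 1)).2)

lemma cyclic_sum_zero {n : ℕ} (x : Fin (n + 1) → ℝ) :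
    ∑ i, (x (i + 1) - x i) = 0 := by
  rw [Finset.sum_sub_distrib]
  rw [show ∑ i, x (i + 1) = ∑ i, x i from
    Fintype.sum_equiv (Equiv.addRight (1 : Fin (n + 1))) _ _ (fun i => rfl)]
  exact sub_self _

lemma aux_all_zero {β : ℝ} (hβ : Irrational β) {n : ℕ} (x ε : Fin (n + 1) → ℝ)
    (hε : ∀ i, ε i = 0 ∨ ε i = β) (h : ∀ i, ∃ m : ℤ, x (i + 1) - x i = ε i + m) :
    ∀ i, ε i = 0 := by
  classical
  choose m hm using h
  have hsum : ∑ i, (ε i + (m i : ℝ)) = 0 := by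
    rw [← cyclic_sum_zero x]
    exact Finset.sum_congr rfl fun i _ => (hm i).symm
  rw [Finset.sum_add_distrib] at hsum
  set S := Finset.univ.filter (fun i => ε i ≠ 0) with hS
  have hcard : ∑ i, ε i = (S.card : ℝ) * β := by
    rw [← Finset.sum_filter_ne_zero Finset.univ]
    rw [Finset.sum_congr rfl (fun i hi => ?_), Finset.sum_const, nsmul_eq_mul]
    exact (hε i).resolve_left (Finset.mem_filter.1 hi).2
  by_contra hne
  push_neg at hne
  obtain ⟨i, hi⟩ := hne
  have hk : S.card ≠ 0 := by
    refine Finset.card_ne_zero_of_mem (a := i) ?_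
    simp [S, hi]
  have : ((S.card : ℝ)) * β = ((-(∑ i, m i) : ℤ) : ℝ) := by
    rw [← hcard]
    push_cast
    linarith [hsum]
  exact (hβ.natCast_mul hk).ne_int _ this

lemma rot_map_eq {α : ℝ} (hα0 : 0 < α) (hα1 : α < 1) :
    (volume.restrict (Icc (0:ℝ) 1)).map (fun x => Int.fract (x + α)) =
      volume.restrict (Icc (0:ℝ) 1) := by
  have hT : Measurable (fun x : ℝ => Int.fract (x + α)) :=
    (measurable_id.add_const α).fract
  have hIco : volume.restrict (Icc (0:ℝ) 1) = volume.restrict (Ico (0:ℝ) 1) :=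
    (Measure.restrict_congr_set Ico_ae_eq_Icc).symm
  rw [hIco]
  have hsplit : Ico (0:ℝ) 1 = Ico 0 (1-α) ∪ Ico (1-α) 1 :=
    (Ico_union_Ico_eq_Ico (by linarith) (by linarith)).symm
  have hdisj : Disjoint (Ico (0:ℝ) (1-α)) (Ico (1-α) 1) :=
    Set.Ico_disjoint_Ico_same
  conv_lhs => rw [hsplit, Measure.restrict_union hdisj measurableSet_Ico]
  rw [Measure.map_add _ _ hT]
  have h1 : (volume.restrict (Ico (0:ℝ) (1-α))).map (fun x => Int.fract (x + α)) =
      volume.restrict (Ico α 1) := by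
    have hcongr : (fun x : ℝ => Int.fract (x + α)) =ᵐ[volume.restrict (Ico (0:ℝ) (1-α))]
        (fun x => x + α) := by
      refine ae_restrict_of_forall_mem measurableSet_Ico fun x hx => ?_
      exact Int.fract_eq_self.2 ⟨by linarith [hx.1], by linarith [hx.2]⟩
    rw [Measure.map_congr hcongr]
    have hpre : (fun x : ℝ => x + α) ⁻¹' (Ico α 1) = Ico (0:ℝ) (1-α) := by
      rw [preimage_add_const_Ico]; norm_num
    have := ((measurePreserving_add_right volume α).restrict_preimage_emb
      (MeasurableEquiv.addRight α).measurableEmbedding (Ico α 1)).map_eq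
    rwa [hpre] at this
  have h2 : (volume.restrict (Ico (1-α) 1)).map (fun x => Int.fract (x + α)) =
      volume.restrict (Ico (0:ℝ) α) := by
    have hcongr : (fun x : ℝ => Int.fract (x + α)) =ᵐ[volume.restrict (Ico (1-α) (1:ℝ))]
        (fun x => x + (α - 1)) := by
      refine ae_restrict_of_forall_mem measurableSet_Ico fun x hx => ?_
      show Int.fract (x + α) = x + (α - 1)
      rw [show Int.fract (x + α) = Int.fract (x + α - (1:ℤ)) from (Int.fract_sub_intCast _ _).symm]
      push_cast
      rw [Int.fract_eq_self.2 ⟨by linarith [hx.1], by linarith [hx.2]⟩]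
      ring
    rw [Measure.map_congr hcongr]
    have hpre : (fun x : ℝ => x + (α - 1)) ⁻¹' (Ico (0:ℝ) α) = Ico (1-α) 1 := by
      rw [preimage_add_const_Ico]; norm_num
    have := ((measurePreserving_add_right volume (α - 1)).restrict_preimage_emb
      (MeasurableEquiv.addRight (α - 1)).measurableEmbedding (Ico (0:ℝ) α)).map_eq
    rwa [hpre] at this
  rw [h1, h2, add_comm, ← Measure.restrict_union Set.Ico_disjoint_Ico_same measurableSet_Ico,
    Ico_union_Ico_eq_Ico (by linarith) (by linarith)]

theorem ambrosio_pratelli_example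
    (α : ℝ) (hα : Irrational α) (hα01 : α ∈ Ico (0 : ℝ) 1)
    (a b : ℝ≥0∞) (ha : a ≠ ⊤) (hb : b ≠ ⊤)
    (c : ℝ × ℝ → ℝ≥0∞)
    (Γ₀ : Set (ℝ × ℝ)) (hΓ₀ : Γ₀ = (fun x => (x, x)) '' Icc (0 : ℝ) 1)
    (Γ₁ : Set (ℝ × ℝ)) (hΓ₁ : Γ₁ = (fun x => (x, Int.fract (x + α))) '' Icc (0 : ℝ) 1)
    (hca : ∀ p ∈ Γ₀, c p = a) (hcb : ∀ p ∈ Γ₁, c p = b)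
    (hcinf : ∀ p : ℝ × ℝ, p ∉ Γ₀ → p ∉ Γ₁ → c p = ⊤) :
    let μ : Measure ℝ := volume.restrict (Icc (0 : ℝ) 1)
    let π₀ : Measure (ℝ × ℝ) := μ.map (fun x => (x, x))
    let π₁ : Measure (ℝ × ℝ) := μ.map (fun x => (x, Int.fract (x + α)))
    CMonotoneSet c Γ₀ ∧ CMonotoneSet c Γ₁ ∧
    IsCoupling μ μ π₀ ∧ IsCoupling μ μ π₁ ∧
    π₀ Γ₀ = 1 ∧ π₁ Γ₁ = 1 ∧
    (∫⁻ p, c p ∂π₀ = a) ∧ (∫⁻ p, c p ∂π₁ = b) ∧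
    (b < a → ¬ ∀ π' : Measure (ℝ × ℝ), IsCoupling μ μ π' →
      ∫⁻ p, c p ∂π₀ ≤ ∫⁻ p, c p ∂π') := by
  classical
  intro μ π₀ π₁
  have hαne : α ≠ 0 := by simpa using hα.ne_int 0
  have hαpos : 0 < α := lt_of_le_of_ne hα01.1 (Ne.symm hαne)
  have hα1 : α < 1 := hα01.2
  have hT : Measurable (fun x : ℝ => Int.fract (x + α)) :=
    (measurable_id.add_const α).fract
  have hg₀ : Measurable (fun x : ℝ => (x, x)) := measurable_id.prodMk measurable_id
  have hg₁ : Measurable (fun x : ℝ => (x, Int.fract (x + α))) := measurable_id.prodMk hT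
  have hΓ₀' : Γ₀ = {p : ℝ × ℝ | p.1 ∈ Icc (0:ℝ) 1 ∧ p.2 = p.1} := by
    rw [hΓ₀]; ext ⟨u, v⟩
    simp only [mem_image, mem_setOf_eq, Prod.mk.injEq]
    constructor
    · rintro ⟨x, hx, rfl, rfl⟩; exact ⟨hx, rfl⟩
    · rintro ⟨hu, hv⟩; exact ⟨u, hu, rfl, hv.symm⟩
  have hΓ₁' : Γ₁ = {p : ℝ × ℝ | p.1 ∈ Icc (0:ℝ) 1 ∧ p.2 = Int.fract (p.1 + α)} := by
    rw [hΓ₁]; ext ⟨u, v⟩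
    simp only [mem_image, mem_setOf_eq, Prod.mk.injEq]
    constructor
    · rintro ⟨x, hx, rfl, rfl⟩; exact ⟨hx, rfl⟩
    · rintro ⟨hu, hv⟩; exact ⟨u, hu, rfl, hv.symm⟩
  -- c-monotonicity of Γ₀
  have hmono₀ : CMonotoneSet c Γ₀ := by
    intro n f hf
    by_cases hgood : ∀ i, ((f i).1, (f (i + 1)).2) ∈ Γ₀ ∨ ((f i).1, (f (i + 1)).2) ∈ Γ₁
    · have hx : ∀ i, (f i).2 = (f i).1 := by
        intro i; have := hf i; rw [hΓ₀'] at this; exact this.2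
      set ε : Fin (n + 1) → ℝ :=
        fun i => if ((f i).1, (f (i + 1)).2) ∈ Γ₀ then 0 else α with hεdef
      have hεor : ∀ i, ε i = 0 ∨ ε i = α := by
        intro i; by_cases h : ((f i).1, (f (i + 1)).2) ∈ Γ₀ <;> simp [hεdef, h]
      have hεm : ∀ i, ∃ m : ℤ, (f (i + 1)).1 - (f i).1 = ε i + m := by
        intro i
        by_cases h : ((f i).1, (f (i + 1)).2) ∈ Γ₀
        · refine ⟨0, ?_⟩
          have h2 : (f (i + 1)).2 = (f i).1 := by rw [hΓ₀'] at h; exact h.2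
          have h3 := hx (i + 1)
          simp only [hεdef, if_pos h, Int.cast_zero, add_zero]
          rw [← h3, h2, sub_self]
        · have h1 : ((f i).1, (f (i + 1)).2) ∈ Γ₁ := (hgood i).resolve_left h
          rw [hΓ₁'] at h1
          have h2 : (f (i + 1)).2 = Int.fract ((f i).1 + α) := h1.2
          have h3 := hx (i + 1)
          refine ⟨-⌊(f i).1 + α⌋, ?_⟩
          have h4 : (f (i + 1)).1 = (f i).1 + α - ⌊(f i).1 + α⌋ := by
            rw [← h3, h2, Int.self_sub_floor]
          simp only [hεdef, if_neg h]
          push_cast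
          linarith [h4]
      have hz := aux_all_zero hα (fun i => (f i).1) ε hεor hεm
      have hall : ∀ i, ((f i).1, (f (i + 1)).2) ∈ Γ₀ := by
        intro i
        by_contra h
        have hh : ε i = α := by simp [hεdef, h]
        rw [hz i] at hh
        exact hαne hh.symm
      refine le_of_eq ?_
      rw [Finset.sum_congr rfl fun i _ => hca _ (hf i),
        Finset.sum_congr rfl fun i _ => hca _ (hall i)]
    · push_neg at hgood
      obtain ⟨i, h0, h1⟩ := hgood
      have htop : c ((f i).1, (f (i + 1)).2) = ⊤ := hcinf _ h0 h1
      calc ∑ i, c (f i) ≤ ⊤ := le_top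
        _ = c ((f i).1, (f (i + 1)).2) := htop.symm
        _ ≤ ∑ j, c ((f j).1, (f (j + 1)).2) :=
            Finset.single_le_sum (f := fun j => c ((f j).1, (f (j + 1)).2))
              (fun j _ => zero_le) (Finset.mem_univ i)
  -- c-monotonicity of Γ₁
  have hmono₁ : CMonotoneSet c Γ₁ := by
    intro n f hf
    by_cases hgood : ∀ i, ((f i).1, (f (i + 1)).2) ∈ Γ₀ ∨ ((f i).1, (f (i + 1)).2) ∈ Γ₁
    · have hx : ∀ i, (f i).2 = Int.fract ((f i).1 + α) := by
        intro i; have := hf i; rw [hΓ₁'] at this; exact this.2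
      set ε : Fin (n + 1) → ℝ :=
        fun i => if ((f i).1, (f (i + 1)).2) ∈ Γ₁ then 0 else -α with hεdef
      have hεor : ∀ i, ε i = 0 ∨ ε i = -α := by
        intro i; by_cases h : ((f i).1, (f (i + 1)).2) ∈ Γ₁ <;> simp [hεdef, h]
      have hεm : ∀ i, ∃ m : ℤ, (f (i + 1)).1 - (f i).1 = ε i + m := by
        intro i
        by_cases h : ((f i).1, (f (i + 1)).2) ∈ Γ₁
        · have h1 := h; rw [hΓ₁'] at h1
          have h2 : (f (i + 1)).2 = Int.fract ((f i).1 + α) := h1.2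
          have h3 := hx (i + 1)
          refine ⟨⌊(f (i + 1)).1 + α⌋ - ⌊(f i).1 + α⌋, ?_⟩
          have h4 : Int.fract ((f (i + 1)).1 + α) = Int.fract ((f i).1 + α) := by
            rw [← h3, h2]
          rw [Int.fract, Int.fract] at h4
          simp only [hεdef, if_pos h]
          push_cast
          linarith [h4]
        · have h1 : ((f i).1, (f (i + 1)).2) ∈ Γ₀ := (hgood i).resolve_right h
          rw [hΓ₀'] at h1
          have h2 : (f (i + 1)).2 = (f i).1 := h1.2
          have h3 := hx (i + 1)
          refine ⟨⌊(f (i + 1)).1 + α⌋, ?_⟩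
          have h4 : (f (i + 1)).1 + α - ⌊(f (i + 1)).1 + α⌋ = (f i).1 := by
            rw [Int.self_sub_floor, ← h3, h2]
          simp only [hεdef, if_neg h]
          push_cast
          linarith [h4]
      have hz := aux_all_zero hα.neg (fun i => (f i).1) ε hεor hεm
      have hall : ∀ i, ((f i).1, (f (i + 1)).2) ∈ Γ₁ := by
        intro i
        by_contra h
        have hh : ε i = -α := by simp [hεdef, h]
        rw [hz i] at hh
        exact hαne (by linarith [hh])
      refine le_of_eq ?_
      rw [Finset.sum_congr rfl fun i _ => hcb _ (hf i),
        Finset.sum_congr rfl fun i _ => hcb _ (hall i)]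
    · push_neg at hgood
      obtain ⟨i, h0, h1⟩ := hgood
      have htop : c ((f i).1, (f (i + 1)).2) = ⊤ := hcinf _ h0 h1
      calc ∑ i, c (f i) ≤ ⊤ := le_top
        _ = c ((f i).1, (f (i + 1)).2) := htop.symm
        _ ≤ ∑ j, c ((f j).1, (f (j + 1)).2) :=
            Finset.single_le_sum (f := fun j => c ((f j).1, (f (j + 1)).2))
              (fun j _ => zero_le) (Finset.mem_univ i)
  -- measurability of Γ₀, Γ₁
  have hΓ₀m : MeasurableSet Γ₀ := by
    rw [hΓ₀']
    exact (measurable_fst measurableSet_Icc).inter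
      (measurableSet_eq_fun measurable_snd measurable_fst)
  have hΓ₁m : MeasurableSet Γ₁ := by
    rw [hΓ₁']
    exact (measurable_fst measurableSet_Icc).inter
      (measurableSet_eq_fun measurable_snd (hT.comp measurable_fst))
  have hpre₀ : (fun x : ℝ => (x, x)) ⁻¹' Γ₀ = Icc 0 1 := by
    rw [hΓ₀']; ext x; simp
  have hpre₁ : (fun x : ℝ => (x, Int.fract (x + α))) ⁻¹' Γ₁ = Icc 0 1 := by
    rw [hΓ₁']; ext x; simp
  have hμIcc : μ (Icc (0:ℝ) 1) = 1 := by
    show (volume.restrict (Icc (0:ℝ) 1)) (Icc (0:ℝ) 1) = 1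
    rw [Measure.restrict_apply measurableSet_Icc, inter_self, Real.volume_Icc]
    norm_num
  have hμuniv : μ univ = 1 := by
    show (volume.restrict (Icc (0:ℝ) 1)) univ = 1
    rw [Measure.restrict_apply MeasurableSet.univ, univ_inter, Real.volume_Icc]
    norm_num
  have hμcompl : μ (Icc (0:ℝ) 1)ᶜ = 0 := by
    show (volume.restrict (Icc (0:ℝ) 1)) (Icc (0:ℝ) 1)ᶜ = 0
    rw [Measure.restrict_apply measurableSet_Icc.compl, compl_inter_self, measure_empty]
  -- couplings
  have hcoup₀ : IsCoupling μ μ π₀ := by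
    constructor
    · show (μ.map (fun x : ℝ => (x, x))).map Prod.fst = μ
      rw [Measure.map_map measurable_fst hg₀]
      exact Measure.map_id
    · show (μ.map (fun x : ℝ => (x, x))).map Prod.snd = μ
      rw [Measure.map_map measurable_snd hg₀]
      exact Measure.map_id
  have hcoup₁ : IsCoupling μ μ π₁ := by
    constructor
    · show (μ.map (fun x : ℝ => (x, Int.fract (x + α)))).map Prod.fst = μ
      rw [Measure.map_map measurable_fst hg₁]
      exact Measure.map_id
    · show (μ.map (fun x : ℝ => (x, Int.fract (x + α)))).map Prod.snd = μ
      rw [Measure.map_map measurable_snd hg₁]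
      exact rot_map_eq hαpos hα1
  -- masses
  have hπ₀Γ₀ : π₀ Γ₀ = 1 := by
    show (μ.map (fun x : ℝ => (x, x))) Γ₀ = 1
    rw [Measure.map_apply hg₀ hΓ₀m, hpre₀, hμIcc]
  have hπ₁Γ₁ : π₁ Γ₁ = 1 := by
    show (μ.map (fun x : ℝ => (x, Int.fract (x + α)))) Γ₁ = 1
    rw [Measure.map_apply hg₁ hΓ₁m, hpre₁, hμIcc]
  have hπ₀univ : π₀ univ = 1 := by
    show (μ.map (fun x : ℝ => (x, x))) univ = 1
    rw [Measure.map_apply hg₀ MeasurableSet.univ, preimage_univ, hμuniv]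
  have hπ₁univ : π₁ univ = 1 := by
    show (μ.map (fun x : ℝ => (x, Int.fract (x + α)))) univ = 1
    rw [Measure.map_apply hg₁ MeasurableSet.univ, preimage_univ, hμuniv]
  have hπ₀compl : π₀ Γ₀ᶜ = 0 := by
    show (μ.map (fun x : ℝ => (x, x))) Γ₀ᶜ = 0
    rw [Measure.map_apply hg₀ hΓ₀m.compl, preimage_compl, hpre₀, hμcompl]
  have hπ₁compl : π₁ Γ₁ᶜ = 0 := by
    show (μ.map (fun x : ℝ => (x, Int.fract (x + α)))) Γ₁ᶜ = 0
    rw [Measure.map_apply hg₁ hΓ₁m.compl, preimage_compl, hpre₁, hμcompl]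
  -- integrals
  have hint₀ : ∫⁻ p, c p ∂π₀ = a := by
    have hae : ∀ᵐ p ∂π₀, c p = a := by
      rw [Filter.eventually_iff, mem_ae_iff]
      refine measure_mono_null (fun p hp => ?_) hπ₀compl
      exact fun hmem => hp (hca p hmem)
    rw [lintegral_congr_ae hae, lintegral_const, hπ₀univ, mul_one]
  have hint₁ : ∫⁻ p, c p ∂π₁ = b := by
    have hae : ∀ᵐ p ∂π₁, c p = b := by
      rw [Filter.eventually_iff, mem_ae_iff]
      refine measure_mono_null (fun p hp => ?_) hπ₁compl
      exact fun hmem => hp (hcb p hmem)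
    rw [lintegral_congr_ae hae, lintegral_const, hπ₁univ, mul_one]
  refine ⟨hmono₀, hmono₁, hcoup₀, hcoup₁, hπ₀Γ₀, hπ₁Γ₁, hint₀, hint₁, ?_⟩
  intro hba hall
  have h := hall π₁ hcoup₁
  rw [hint₀, hint₁] at h
  exact hba.not_ge h
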